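/- arXiv:1901.10292 — 3 statements merged into one kernel-verified Lean document; each statement's English description precedes it below -/
import Mathlib

section
/- The semigroup (T(t))_{t≥0} on X = L^∞([0,1], ℓ¹) defined by (T(t)f)(s) = Bⁿ f(t+s−n) for n ≤ t+s < n+1 (with B column-stochastic on ℓ¹) is strongly continuous with respect to the weak*-topology induced by the predual L¹([0,1], c₀): for every f ∈ X and g ∈ L¹([0,1], c₀), ⟨T(t)f − f, g⟩ → 0 as t → 0⁺. -/
open MeasureTheory Set Filter
open scoped NNReal ENNReal ZeroAtInfty

instance : Fact ((1 : ℝ≥0∞) ≤ 1) := ⟨le_rfl⟩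

/-- The flow semigroup on `L^∞([0,1], ℓ¹)`: `(T(t)f)(s) = Bⁿ f(t+s−n)` for `n ≤ t+s < n+1`. -/
noncomputable def networkFlow
    (B : lp (fun _ : ℕ => ℝ) 1 →L[ℝ] lp (fun _ : ℕ => ℝ) 1)
    (t : ℝ) (f : ℝ → lp (fun _ : ℕ => ℝ) 1) : ℝ → lp (fun _ : ℕ => ℝ) 1 :=
  fun s => (B ^ ⌊t + s⌋₊) (f (t + s - ⌊t + s⌋₊))

section Aux

noncomputable abbrev X1 := lp (fun _ : ℕ => ℝ) 1

lemma aux_abs_apply_le (x : X1) (j : ℕ) : |x j| ≤ ‖x‖ := by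
  have h := lp.norm_apply_le_norm (by norm_num) x j
  simpa using h

lemma aux_summable_abs (x : X1) : Summable (fun j => |x j|) := by
  have := (lp.memℓp x).summable (p := 1) (by norm_num)
  simpa using this

lemma aux_norm_eq (x : X1) : ‖x‖ = ∑' j, |x j| := by
  have := lp.norm_eq_tsum_rpow (p := 1) (by norm_num) x
  simpa using this

lemma aux_c0_apply_le (y : C₀(ℕ, ℝ)) (j : ℕ) : |y j| ≤ ‖y‖ := by
  have := y.toBCF.norm_coe_le_norm j
  simpa [ZeroAtInftyContinuousMap.norm_toBCF_eq_norm] using this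

lemma aux_summable_mul (x : X1) (y : C₀(ℕ, ℝ)) : Summable (fun j => x j * y j) := by
  refine Summable.of_norm (Summable.of_nonneg_of_le (fun j => norm_nonneg _) (fun j => ?_)
    ((aux_summable_abs x).mul_right ‖y‖))
  calc ‖x j * y j‖ = |x j| * |y j| := by simp [abs_mul]
    _ ≤ |x j| * ‖y‖ := by
        exact mul_le_mul_of_nonneg_left (aux_c0_apply_le y j) (abs_nonneg _)

lemma aux_pair_bound (x : X1) (y : C₀(ℕ, ℝ)) : ‖∑' j, x j * y j‖ ≤ ‖x‖ * ‖y‖ := by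
  calc ‖∑' j, x j * y j‖ ≤ ∑' j, ‖x j * y j‖ := norm_tsum_le_tsum_norm (aux_summable_mul x y).norm
    _ = ∑' j, |x j| * ‖y j‖ := by simp [abs_mul]
    _ ≤ ∑' j, |x j| * ‖y‖ := by
        refine Summable.tsum_le_tsum (fun j => ?_) ?_ ((aux_summable_abs x).mul_right ‖y‖)
        · exact mul_le_mul_of_nonneg_left (aux_c0_apply_le y j) (abs_nonneg _)
        · exact Summable.of_nonneg_of_le (fun j => by positivity)
            (fun j => mul_le_mul_of_nonneg_left (aux_c0_apply_le y j) (abs_nonneg _))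
            ((aux_summable_abs x).mul_right ‖y‖)
    _ = ‖x‖ * ‖y‖ := by rw [tsum_mul_right, aux_norm_eq]

noncomputable def pairCLM : X1 →L[ℝ] C₀(ℕ, ℝ) →L[ℝ] ℝ :=
  LinearMap.mkContinuous₂
    (LinearMap.mk₂ ℝ (fun x y => ∑' j, x j * y j)
      (fun x x' y => by
        simp only []
        rw [← Summable.tsum_add (aux_summable_mul x y) (aux_summable_mul x' y)]
        congr 1; ext j; simp [add_mul]
        )
      (fun c x y => by
        rw [← tsum_const_smul'' c]
        exact tsum_congr fun j => by simp [mul_assoc]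
        )
      (fun x y y' => by
        simp only []
        rw [← Summable.tsum_add (aux_summable_mul x y) (aux_summable_mul x y')]
        congr 1; ext j; simp [mul_add]
        )
      (fun c x y => by
        rw [← tsum_const_smul'' c]
        exact tsum_congr fun j => by simp; ring
        ))
    1 (fun x y => by simpa using aux_pair_bound x y)

lemma pairCLM_apply (x : X1) (y : C₀(ℕ, ℝ)) : pairCLM x y = ∑' j, x j * y j := rfl

lemma pairCLM_norm_le (x : X1) (y : C₀(ℕ, ℝ)) : ‖pairCLM x y‖ ≤ ‖x‖ * ‖y‖ := aux_pair_bound x y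

lemma aux_tendsto_S (G : ℝ → ℝ) (hG : IntegrableOn G (Icc 0 1)) :
    Tendsto (fun t => ∫ u in Icc (1-t) 1, G u) (nhdsWithin (0:ℝ) (Ioi 0)) (nhds 0) := by
  have hmem : Ioo (0:ℝ) 1 ∈ nhdsWithin (0:ℝ) (Ioi 0) :=
    Ioo_mem_nhdsGT_of_mem ⟨le_refl _, one_pos⟩
  have key : Tendsto (fun t => ∫ u in Icc (0:ℝ) 1, (Ici (1-t)).indicator G u)
      (nhdsWithin (0:ℝ) (Ioi 0)) (nhds (∫ u in Icc (0:ℝ) 1, (0:ℝ))) := by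
    apply tendsto_integral_filter_of_dominated_convergence (fun u => ‖G u‖)
    · filter_upwards with t
      exact hG.1.indicator measurableSet_Ici
    · filter_upwards with t
      filter_upwards with u
      exact norm_indicator_le_norm_self G u
    · exact hG.norm
    · have h1 : ∀ᵐ u ∂(volume.restrict (Icc (0:ℝ) 1)), u ≠ 1 := by
        refine ae_iff.2 ?_
        have : {u : ℝ | ¬ u ≠ 1} = {1} := by ext u; simp
        rw [this]
        exact le_antisymm ((Measure.restrict_apply_le _ _).trans (by simp)) (by simp)
      filter_upwards [h1, ae_restrict_mem measurableSet_Icc] with u hu hmem2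
      have hu1 : u < 1 := lt_of_le_of_ne hmem2.2 hu
      have hev : ∀ᶠ t in nhdsWithin (0:ℝ) (Ioi 0), (Ici (1-t)).indicator G u = 0 := by
        have : Iio (1 - u) ∈ nhdsWithin (0:ℝ) (Ioi 0) :=
          nhdsWithin_le_nhds (Iio_mem_nhds (by linarith))
        filter_upwards [this] with t ht
        apply indicator_of_notMem
        simp only [mem_Ici, not_le]
        linarith [mem_Iio.1 ht]
      exact Tendsto.congr' (hev.mono fun t h => h.symm) tendsto_const_nhds
  simp only [integral_zero] at key
  refine Tendsto.congr' ?_ key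
  filter_upwards [hmem] with t ht
  have hset : Ici (1-t) ∩ Icc (0:ℝ) 1 = Icc (1-t) 1 := by
    ext u
    simp only [mem_inter_iff, mem_Ici, mem_Icc]
    constructor
    · rintro ⟨h1, _, h3⟩; exact ⟨h1, h3⟩
    · rintro ⟨h1, h2⟩; exact ⟨h1, by linarith [ht.2], h2⟩
  rw [integral_indicator measurableSet_Ici, Measure.restrict_restrict measurableSet_Ici, hset]

lemma aux_tendsto_T {E : Type} [NormedAddCommGroup E] [NormedSpace ℝ E]
    (g0 : ℝ → E) (hg0 : Integrable g0) :
    Tendsto (fun t => ∫ u, ‖g0 (u - t) - g0 u‖) (nhdsWithin (0:ℝ) (Ioi 0)) (nhds 0) := by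
  have hmem : Ioo (0:ℝ) 1 ∈ nhdsWithin (0:ℝ) (Ioi 0) :=
    Ioo_mem_nhdsGT_of_mem ⟨le_refl _, one_pos⟩
  rw [Metric.tendsto_nhds]
  intro ε hε
  obtain ⟨h, h_supp, h_close, h_cont, h_int⟩ :=
    hg0.exists_hasCompactSupport_integral_sub_le (by positivity : (0:ℝ) < ε/4)
  obtain ⟨C, hC⟩ := h_cont.bounded_above_of_compact_support h_supp
  set K : Set ℝ := Metric.cthickening 1 (tsupport h) with hK
  have hKcomp : IsCompact K := h_supp.cthickening
  have hTh : Tendsto (fun t => ∫ u, ‖h (u - t) - h u‖) (nhdsWithin (0:ℝ) (Ioi 0)) (nhds 0) := by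
    have key : Tendsto (fun t => ∫ u, ‖h (u - t) - h u‖) (nhdsWithin (0:ℝ) (Ioi 0))
        (nhds (∫ _ : ℝ, (0:ℝ))) := by
      apply tendsto_integral_filter_of_dominated_convergence
        (fun u => K.indicator (fun _ => 2 * C) u)
      · filter_upwards with t
        exact ((h_cont.comp (continuous_sub_right t)).sub h_cont).norm.aestronglyMeasurable
      · filter_upwards [hmem] with t ht
        filter_upwards with u
        by_cases hu : u ∈ K
        · rw [indicator_of_mem hu]
          simp only [Real.norm_eq_abs, abs_norm]
          calc ‖h (u - t) - h u‖ ≤ ‖h (u - t)‖ + ‖h u‖ := norm_sub_le _ _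
            _ ≤ C + C := add_le_add (hC _) (hC _)
            _ = 2 * C := by ring
        · rw [indicator_of_notMem hu]
          have hu1 : h u = 0 := by
            apply image_eq_zero_of_notMem_tsupport
            intro hmem'
            exact hu (Metric.self_subset_cthickening _ hmem')
          have hu2 : h (u - t) = 0 := by
            apply image_eq_zero_of_notMem_tsupport
            intro hmem'
            apply hu
            apply Metric.mem_cthickening_of_dist_le u (u - t) 1 _ hmem'
            rw [Real.dist_eq]
            have := ht.1
            have := ht.2
            rw [abs_of_nonneg (by linarith [sub_sub_cancel u t] : (0:ℝ) ≤ u - (u - t))]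
            linarith
          simp [hu1, hu2]
      · exact (integrable_indicator_iff hKcomp.measurableSet).2
          (integrableOn_const hKcomp.measure_lt_top.ne)
      · filter_upwards with u
        have h3 : Tendsto (fun t : ℝ => h (u - t)) (nhds 0) (nhds (h u)) := by
          have := (h_cont.tendsto (u - 0)).comp
            ((continuous_const.sub continuous_id).tendsto 0)
          simp only [sub_zero] at this; exact this
        have h4 : Tendsto (fun t : ℝ => ‖h (u - t) - h u‖) (nhds 0) (nhds 0) := by
          have h2 := h3.sub (tendsto_const_nhds (x := h u))
          rw [sub_self] at h2
          simpa using h2.norm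
        exact h4.mono_left nhdsWithin_le_nhds
    simpa using key
  have hint_close : ∫ u, ‖g0 u - h u‖ ≤ ε/4 := h_close
  have hsplit : ∀ t ∈ Ioo (0:ℝ) 1,
      (∫ u, ‖g0 (u - t) - g0 u‖) ≤ (ε/4) + (∫ u, ‖h (u - t) - h u‖) + (ε/4) := by
    intro t _
    have i1 : Integrable (fun u => g0 (u - t) - h (u - t)) := (hg0.sub h_int).comp_sub_right t
    have i2 : Integrable (fun u => h (u - t) - h u) :=
      (h_int.comp_sub_right t).sub h_int
    have i3 : Integrable (fun u => h u - g0 u) := h_int.sub hg0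
    calc (∫ u, ‖g0 (u - t) - g0 u‖)
        ≤ ∫ u, (‖g0 (u - t) - h (u - t)‖ + ‖h (u - t) - h u‖ + ‖h u - g0 u‖) := by
          apply integral_mono_of_nonneg
          · filter_upwards with u; positivity
          · exact (i1.norm.add i2.norm).add i3.norm
          · filter_upwards with u
            calc ‖g0 (u - t) - g0 u‖
                = ‖(g0 (u - t) - h (u - t)) + (h (u - t) - h u) + (h u - g0 u)‖ := by
                  congr 1; abel
              _ ≤ _ := (norm_add_le _ _).trans (add_le_add (norm_add_le _ _) le_rfl)
      _ = (∫ u, ‖g0 (u - t) - h (u - t)‖) + (∫ u, ‖h (u - t) - h u‖) + (∫ u, ‖h u - g0 u‖) := by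
          have i12 : Integrable (fun u => ‖g0 (u - t) - h (u - t)‖ + ‖h (u - t) - h u‖) :=
            i1.norm.add i2.norm
          rw [integral_add i12 i3.norm, integral_add i1.norm i2.norm]
      _ ≤ (ε/4) + (∫ u, ‖h (u - t) - h u‖) + (ε/4) := by
          have e1 : (∫ u, ‖g0 (u - t) - h (u - t)‖) = ∫ u, ‖g0 u - h u‖ :=
            integral_sub_right_eq_self (fun u => ‖g0 u - h u‖) t
          have e3 : (∫ u, ‖h u - g0 u‖) = ∫ u, ‖g0 u - h u‖ := by
            congr 1; ext u; rw [norm_sub_rev]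
          rw [e1, e3]
          exact add_le_add (add_le_add hint_close le_rfl) hint_close
  have hTh' : ∀ᶠ t in nhdsWithin (0:ℝ) (Ioi 0), (∫ u, ‖h (u - t) - h u‖) < ε/4 := by
    have := hTh (Iio_mem_nhds (by positivity : (0:ℝ) < ε/4))
    filter_upwards [this] with t ht
    simpa using ht
  filter_upwards [hmem, hTh'] with t ht hth
  rw [Real.dist_eq, sub_zero]
  have hnn : (0:ℝ) ≤ ∫ u, ‖g0 (u - t) - g0 u‖ := integral_nonneg fun u => norm_nonneg _
  rw [abs_of_nonneg hnn]
  calc (∫ u, ‖g0 (u - t) - g0 u‖) ≤ (ε/4) + (∫ u, ‖h (u - t) - h u‖) + (ε/4) := hsplit t ht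
    _ < ε/4 + ε/4 + ε/4 := by linarith
    _ < ε := by linarith

lemma aux_k_bound {E : Type} [NormedAddCommGroup E] (g' : ℝ → E) {t : ℝ} (ht : t ∈ Ioo (0:ℝ) 1)
    (u : ℝ) :
    ‖(Ico t 1).indicator (fun u => g' (u - t)) u - (Ico 0 (1-t)).indicator g' u‖ ≤
      ‖(Icc 0 1).indicator g' (u - t) - (Icc 0 1).indicator g' u‖
      + (Icc 1 (1+t)).indicator (fun u => ‖g' (u - t)‖) u
      + (Icc (1-t) 1).indicator (fun u => ‖g' u‖) u := by
  obtain ⟨ht0, ht1⟩ := ht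
  have hind1 : (0:ℝ) ≤ (Icc 1 (1+t)).indicator (fun u => ‖g' (u - t)‖) u :=
    indicator_nonneg (fun x _ => norm_nonneg _) u
  have hind2 : (0:ℝ) ≤ (Icc (1-t) 1).indicator (fun u => ‖g' u‖) u :=
    indicator_nonneg (fun x _ => norm_nonneg _) u
  by_cases h1 : u ∈ Ico t 1 <;> by_cases h2 : u ∈ Ico 0 (1-t)
  · rw [indicator_of_mem h1, indicator_of_mem h2]
    have hm1 : u - t ∈ Icc (0:ℝ) 1 := ⟨by linarith [h1.1], by linarith [h1.2.le]⟩
    have hm2 : u ∈ Icc (0:ℝ) 1 := ⟨h2.1, h1.2.le⟩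
    rw [indicator_of_mem hm1, indicator_of_mem hm2]
    linarith
  · rw [indicator_of_mem h1, indicator_of_notMem h2, sub_zero]
    have hu : 1 - t ≤ u := by
      by_contra hc
      exact h2 ⟨by linarith [h1.1], by linarith⟩
    have hm1 : u - t ∈ Icc (0:ℝ) 1 := ⟨by linarith [h1.1], by linarith [h1.2.le]⟩
    have hm2 : u ∈ Icc (0:ℝ) 1 := ⟨by linarith [h1.1], h1.2.le⟩
    have hm3 : u ∈ Icc (1-t) 1 := ⟨hu, h1.2.le⟩
    rw [indicator_of_mem hm1, indicator_of_mem hm2, indicator_of_mem hm3]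
    have : ‖g' (u - t)‖ ≤ ‖g' (u - t) - g' u‖ + ‖g' u‖ := by
      calc ‖g' (u - t)‖ = ‖(g' (u - t) - g' u) + g' u‖ := by congr 1; abel
        _ ≤ _ := norm_add_le _ _
    linarith
  · rw [indicator_of_notMem h1, indicator_of_mem h2, zero_sub, norm_neg]
    have hu : u < t := by
      by_contra hc
      exact h1 ⟨by linarith, by linarith [h2.2]⟩
    have hm1 : u - t ∉ Icc (0:ℝ) 1 := by
      intro hc
      linarith [hc.1]
    have hm2 : u ∈ Icc (0:ℝ) 1 := ⟨h2.1, by linarith [h2.2]⟩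
    rw [indicator_of_notMem hm1, indicator_of_mem hm2, zero_sub, norm_neg]
    linarith
  · rw [indicator_of_notMem h1, indicator_of_notMem h2, sub_zero, norm_zero]
    positivity

end Aux

set_option maxHeartbeats 1000000 in
/-- The semigroup `(T(t))_{t≥0}` on `X = L^∞([0,1], ℓ¹)`, `(T(t)f)(s) = Bⁿ f(t+s−n)` with `B`
column-stochastic on `ℓ¹`, is strongly continuous for the weak*-topology induced by the predual
`L¹([0,1], c₀)`: for every `f ∈ X` and `g ∈ L¹([0,1], c₀)`, `⟨T(t)f − f, g⟩ → 0` as `t → 0⁺`,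
where `⟨f,g⟩ = ∫₀¹ ⟨f(s), g(s)⟩ ds` is the duality pairing between `ℓ¹ = (c₀)'` and `c₀`. -/
theorem stmt_9 (b : ℕ → ℕ → ℝ) (hpos : ∀ i j, 0 ≤ b i j)
    (hcol : ∀ j, HasSum (fun i => b i j) 1)
    (B : lp (fun _ : ℕ => ℝ) 1 →L[ℝ] lp (fun _ : ℕ => ℝ) 1)
    (hB : ∀ (x : lp (fun _ : ℕ => ℝ) 1) (i : ℕ), B x i = ∑' j, b i j * x j)
    (f : ℝ → lp (fun _ : ℕ => ℝ) 1) (hf : MemLp f ∞ (volume.restrict (Icc (0 : ℝ) 1)))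
    (g : ℝ → C₀(ℕ, ℝ)) (hg : IntegrableOn g (Icc (0 : ℝ) 1)) :
    Tendsto (fun t : ℝ =>
        ∫ s in Icc (0 : ℝ) 1, ∑' j : ℕ, (networkFlow B t f s j - f s j) * g s j)
      (nhdsWithin 0 (Ioi 0)) (nhds 0) := by
  classical
  set μ01 := volume.restrict (Icc (0:ℝ) 1) with hμ01
  -- measurable representatives
  obtain ⟨f', hf'm, hff'⟩ : ∃ f' : ℝ → X1, StronglyMeasurable f' ∧ f =ᵐ[μ01] f' :=
    ⟨hf.1.mk f, hf.1.stronglyMeasurable_mk, hf.1.ae_eq_mk⟩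
  obtain ⟨g', hg'm, hgg'⟩ : ∃ g' : ℝ → C₀(ℕ, ℝ), StronglyMeasurable g' ∧ g =ᵐ[μ01] g' :=
    ⟨hg.1.mk g, hg.1.stronglyMeasurable_mk, hg.1.ae_eq_mk⟩
  have hg' : IntegrableOn g' (Icc (0:ℝ) 1) := hg.congr hgg'
  set M : ℝ := (eLpNormEssSup f μ01).toReal with hM
  have hM0 : 0 ≤ M := ENNReal.toReal_nonneg
  have hMf : ∀ᵐ u ∂μ01, ‖f u‖ ≤ M := by
    have htop : eLpNormEssSup f μ01 ≠ ⊤ := by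
      have h2 := hf.2
      rw [eLpNorm_exponent_top] at h2
      exact h2.ne
    filter_upwards [ae_le_eLpNormEssSup (f := f) (μ := μ01)] with u hu
    have := ENNReal.toReal_mono htop hu
    simpa using this
  have hAe : ∀ᵐ u ∂μ01, f u = f' u ∧ ‖f' u‖ ≤ M ∧ g u = g' u := by
    filter_upwards [hff', hMf, hgg'] with u h1 h2 h3
    exact ⟨h1, h1 ▸ h2, h3⟩
  obtain ⟨N, hNnull, hNm, hNsub⟩ : ∃ N : Set ℝ, volume N = 0 ∧ MeasurableSet N ∧
      ∀ u, u ∈ Icc (0:ℝ) 1 → u ∉ N → (f u = f' u ∧ ‖f' u‖ ≤ M ∧ g u = g' u) := by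
    have h1 := (ae_restrict_iff' measurableSet_Icc).1 hAe
    rw [ae_iff] at h1
    refine ⟨toMeasurable volume _, by rwa [measure_toMeasurable],
      measurableSet_toMeasurable _ _, ?_⟩
    intro u hu hnu
    by_contra hcon
    exact hnu (subset_toMeasurable _ _ (by simp only [mem_setOf_eq]; intro h; exact hcon (h hu)))
  have hNshift : ∀ c : ℝ, ∀ᵐ s : ℝ, s + c ∉ N := by
    intro c
    have hpre : volume ((fun s : ℝ => s + c) ⁻¹' N) = 0 :=
      (measurePreserving_add_right volume c).quasiMeasurePreserving.preimage_null hNnull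
    rw [ae_iff]
    have hset : {a : ℝ | ¬ a + c ∉ N} = (fun s : ℝ => s + c) ⁻¹' N := by
      ext a; simp [not_not]
    rw [hset]
    exact hpre
  have hN0 : ∀ᵐ s : ℝ, s ∉ N := by
    rw [ae_iff]
    have hset : {a : ℝ | ¬ a ∉ N} = N := by ext a; simp [not_not]
    rw [hset]
    exact hNnull
  -- extended g
  set g0 : ℝ → C₀(ℕ, ℝ) := (Icc (0:ℝ) 1).indicator g' with hg0def
  have hg0 : Integrable g0 := (integrable_indicator_iff (f := g') measurableSet_Icc).2 hg'
  set Tt : ℝ → ℝ := fun t => ∫ u, ‖g0 (u - t) - g0 u‖ with hTt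
  set St : ℝ → ℝ := fun t => ∫ u in Icc (1-t) 1, ‖g' u‖ with hSt
  have hT : Tendsto Tt (nhdsWithin (0:ℝ) (Ioi 0)) (nhds 0) := aux_tendsto_T g0 hg0
  have hS : Tendsto St (nhdsWithin (0:ℝ) (Ioi 0)) (nhds 0) := aux_tendsto_S _ hg'.norm
  have hmem : Ioo (0:ℝ) 1 ∈ nhdsWithin (0:ℝ) (Ioi 0) :=
    Ioo_mem_nhdsGT_of_mem ⟨le_refl _, one_pos⟩
  -- main bound
  have hbound : ∀ t ∈ Ioo (0:ℝ) 1,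
      |∫ s in Icc (0:ℝ) 1, ∑' j : ℕ, (networkFlow B t f s j - f s j) * g s j| ≤
        M * Tt t + (3 * M + M * ‖B‖) * St t := by
    intro t ht
    obtain ⟨ht0, ht1⟩ := ht
    have h1t0 : (0:ℝ) ≤ 1 - t := by linarith
    have h1t1 : (1:ℝ) - t ≤ 1 := by linarith
    set F1 : ℝ → ℝ := fun s => pairCLM (f' (s + t)) (g' s) with hF1
    set F2 : ℝ → ℝ := fun s => pairCLM (f' s) (g' s) with hF2
    set F3 : ℝ → ℝ := fun s => pairCLM (B (f' (s + (t - 1))) - f' s) (g' s) with hF3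
    -- strong measurability
    have sm1 : StronglyMeasurable F1 :=
      pairCLM.continuous₂.comp_stronglyMeasurable
        ((hf'm.comp_measurable (measurable_add_const t)).prodMk hg'm)
    have sm2 : StronglyMeasurable F2 :=
      pairCLM.continuous₂.comp_stronglyMeasurable (hf'm.prodMk hg'm)
    have sm3 : StronglyMeasurable F3 :=
      pairCLM.continuous₂.comp_stronglyMeasurable
        (((B.continuous.comp_stronglyMeasurable
          (hf'm.comp_measurable (measurable_add_const (t-1)))).sub hf'm).prodMk hg'm)
    -- integrability of the pieces
    have hsubset1 : Ico (0:ℝ) (1-t) ⊆ Icc (0:ℝ) 1 :=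
      Ico_subset_Icc_self.trans (Icc_subset_Icc le_rfl h1t1)
    have hsubset3 : Icc (1-t) 1 ⊆ Icc (0:ℝ) 1 := Icc_subset_Icc h1t0 le_rfl
    have hsubsetI : Ico t 1 ⊆ Icc (0:ℝ) 1 := fun u hu => ⟨by linarith [hu.1], hu.2.le⟩
    have hgM : IntegrableOn (fun x => M * ‖g' x‖) (Icc (0:ℝ) 1) := hg'.norm.const_mul M
    have hgBM : IntegrableOn (fun x => (‖B‖ * M + M) * ‖g' x‖) (Icc (0:ℝ) 1) :=
      hg'.norm.const_mul (‖B‖ * M + M)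
    have hb1 : IntegrableOn F1 (Ico 0 (1-t)) := by
      refine Integrable.mono' (hgM.mono_set hsubset1)
        sm1.aestronglyMeasurable ?_
      filter_upwards [ae_restrict_of_ae (hNshift t), ae_restrict_mem measurableSet_Ico]
        with s hsN hsm
      have hmemI : s + t ∈ Icc (0:ℝ) 1 := ⟨by linarith [hsm.1], by linarith [hsm.2]⟩
      have hp := hNsub (s + t) hmemI hsN
      calc ‖F1 s‖ ≤ ‖f' (s + t)‖ * ‖g' s‖ := pairCLM_norm_le _ _
        _ ≤ M * ‖g' s‖ := mul_le_mul_of_nonneg_right hp.2.1 (norm_nonneg _)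
    have hb2 : IntegrableOn F2 (Icc (0:ℝ) 1) := by
      refine Integrable.mono' (hg'.norm.const_mul M) sm2.aestronglyMeasurable ?_
      filter_upwards [ae_restrict_of_ae hN0, ae_restrict_mem measurableSet_Icc]
        with s hsN hsm
      have hp := hNsub s hsm hsN
      calc ‖F2 s‖ ≤ ‖f' s‖ * ‖g' s‖ := pairCLM_norm_le _ _
        _ ≤ M * ‖g' s‖ := mul_le_mul_of_nonneg_right hp.2.1 (norm_nonneg _)
    have hb3 : IntegrableOn F3 (Icc (1-t) 1) := by
      refine Integrable.mono' (hgBM.mono_set hsubset3)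
        sm3.aestronglyMeasurable ?_
      filter_upwards [ae_restrict_of_ae (hNshift (t-1)), ae_restrict_of_ae hN0,
        ae_restrict_mem measurableSet_Icc] with s hsN1 hsN0 hsm
      have hmemI : s + (t - 1) ∈ Icc (0:ℝ) 1 := ⟨by linarith [hsm.1], by linarith [hsm.2]⟩
      have hmemI2 : s ∈ Icc (0:ℝ) 1 := ⟨by linarith [hsm.1], hsm.2⟩
      have hp1 := hNsub (s + (t-1)) hmemI hsN1
      have hp2 := hNsub s hmemI2 hsN0
      calc ‖F3 s‖ ≤ ‖B (f' (s + (t-1))) - f' s‖ * ‖g' s‖ := pairCLM_norm_le _ _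
        _ ≤ (‖B‖ * M + M) * ‖g' s‖ := by
          refine mul_le_mul_of_nonneg_right ?_ (norm_nonneg _)
          calc ‖B (f' (s + (t-1))) - f' s‖ ≤ ‖B (f' (s + (t-1)))‖ + ‖f' s‖ := norm_sub_le _ _
            _ ≤ ‖B‖ * ‖f' (s + (t-1))‖ + ‖f' s‖ := by
                exact add_le_add (B.le_opNorm _) le_rfl
            _ ≤ ‖B‖ * M + M := add_le_add
                (mul_le_mul_of_nonneg_left hp1.2.1 (norm_nonneg _)) hp2.2.1
    -- the piecewise function
    set hfun : ℝ → ℝ := fun s => if s < 1 - t then F1 s - F2 s else F3 s with hhfun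
    -- Step A : P t = ∫ hfun, and splitting
    have hPsplit : (∫ s in Icc (0:ℝ) 1, ∑' j : ℕ, (networkFlow B t f s j - f s j) * g s j)
        = ((∫ s in Ico (0:ℝ) (1-t), F1 s) - (∫ s in Ico (0:ℝ) (1-t), F2 s))
          + ∫ s in Icc (1-t) 1, F3 s := by
      have hcongr : (fun s => ∑' j : ℕ, (networkFlow B t f s j - f s j) * g s j)
          =ᵐ[μ01] hfun := by
        filter_upwards [ae_restrict_of_ae (hNshift t), ae_restrict_of_ae (hNshift (t-1)),
          ae_restrict_of_ae hN0, ae_restrict_mem measurableSet_Icc]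
          with s hstN hst1N hsN hsI
        have hps := hNsub s hsI hsN
        by_cases hcase : s < 1 - t
        · have hfloor : ⌊t + s⌋₊ = 0 := Nat.floor_eq_zero.2 (by linarith)
          have hnf : networkFlow B t f s = f (t + s) := by
            simp [networkFlow, hfloor]
          have hmemI : s + t ∈ Icc (0:ℝ) 1 := ⟨by linarith [hsI.1], by linarith⟩
          have hp' := hNsub (s + t) hmemI hstN
          have hfts : f (t + s) = f' (s + t) := by rw [add_comm]; exact hp'.1
          simp only [hhfun]
          rw [if_pos hcase]
          have hsub : F1 s - F2 s = pairCLM (f' (s + t) - f' s) (g' s) := by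
            simp only [hF1, hF2]
            rw [map_sub, ContinuousLinearMap.sub_apply]
          rw [hsub, pairCLM_apply]
          refine tsum_congr fun j => ?_
          rw [hnf, hfts, hps.1, hps.2.2]
          congr 1
        · have hsge : 1 - t ≤ s := not_lt.1 hcase
          have h1le : (1:ℝ) ≤ t + s := by linarith
          have h2lt : t + s < 2 := by linarith [hsI.2]
          have hfloor : ⌊t + s⌋₊ = 1 := by
            rw [Nat.floor_eq_iff (by linarith : (0:ℝ) ≤ t + s)]
            push_cast
            constructor <;> linarith
          have hnf : networkFlow B t f s = B (f (t + s - 1)) := by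
            simp [networkFlow, hfloor]
          have hmemI : s + (t - 1) ∈ Icc (0:ℝ) 1 := ⟨by linarith, by linarith [hsI.2]⟩
          have hp' := hNsub (s + (t-1)) hmemI hst1N
          have hfts : f (t + s - 1) = f' (s + (t - 1)) := by
            rw [show t + s - 1 = s + (t - 1) by ring]
            exact hp'.1
          simp only [hhfun]
          rw [if_neg hcase]
          simp only [hF3]
          rw [pairCLM_apply]
          refine tsum_congr fun j => ?_
          rw [hnf, hfts, hps.1, hps.2.2]
          congr 1
      rw [integral_congr_ae hcongr]
      have hunion : Ico (0:ℝ) (1-t) ∪ Icc (1-t) 1 = Icc (0:ℝ) 1 :=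
        Ico_union_Icc_eq_Icc h1t0 h1t1
      have hdisj : Disjoint (Ico (0:ℝ) (1-t)) (Icc (1-t) 1) := by
        rw [Set.disjoint_left]
        intro a ha hb
        exact absurd hb.1 (not_le.2 ha.2)
      have hb12 : IntegrableOn (fun s => F1 s - F2 s) (Ico (0:ℝ) (1-t)) volume :=
        hb1.sub (hb2.mono_set hsubset1)
      have hint1 : IntegrableOn hfun (Ico (0:ℝ) (1-t)) := by
        refine hb12.congr_fun ?_ measurableSet_Ico
        intro s hs
        simp only [hhfun]
        rw [if_pos hs.2]
      have hint2 : IntegrableOn hfun (Icc (1-t) 1) := by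
        refine hb3.congr_fun ?_ measurableSet_Icc
        intro s hs
        simp only [hhfun]
        rw [if_neg (not_lt.2 hs.1)]
      rw [show μ01 = volume.restrict (Ico (0:ℝ) (1-t) ∪ Icc (1-t) 1) from by
        rw [hμ01, hunion]]
      rw [setIntegral_union hdisj measurableSet_Icc hint1 hint2]
      congr 1
      · rw [setIntegral_congr_fun measurableSet_Ico
          (fun s hs => by simp only [hhfun]; rw [if_pos hs.2])]
        exact integral_sub hb1 (hb2.mono_set hsubset1)
      · exact setIntegral_congr_fun measurableSet_Icc
          (fun s hs => by simp only [hhfun]; rw [if_neg (not_lt.2 hs.1)])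
    -- Step B : change of variables for the F1 integral
    have hchg : (∫ s in Ico (0:ℝ) (1-t), F1 s)
        = ∫ u in Ico t 1, pairCLM (f' u) (g' (u - t)) := by
      have hemb : MeasurableEmbedding (fun x : ℝ => x + t) := measurableEmbedding_addRight t
      have := (measurePreserving_add_right volume t).setIntegral_preimage_emb hemb
        (fun u => pairCLM (f' u) (g' (u - t))) (Ico t 1)
      have hpre : (fun x : ℝ => x + t) ⁻¹' Ico t 1 = Ico 0 (1-t) := by
        ext x
        simp only [mem_preimage, mem_Ico]
        constructor
        · rintro ⟨hx1, hx2⟩; exact ⟨by linarith, by linarith⟩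
        · rintro ⟨hx1, hx2⟩; exact ⟨by linarith, by linarith⟩
      rw [hpre] at this
      rw [← this]
      refine setIntegral_congr_fun measurableSet_Ico (fun s _ => ?_)
      simp [hF1]
    -- Step C : the combined kernel k
    set k : ℝ → C₀(ℕ, ℝ) := fun u =>
      (Ico t 1).indicator (fun u => g' (u - t)) u - (Ico 0 (1-t)).indicator g' u with hk
    have hpair_ind : ∀ (s : Set ℝ) (y : ℝ → C₀(ℕ, ℝ)) (u : ℝ),
        pairCLM (f' u) (s.indicator y u) = s.indicator (fun u => pairCLM (f' u) (y u)) u := by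
      intro s y u
      by_cases h : u ∈ s
      · rw [indicator_of_mem h, indicator_of_mem h]
      · rw [indicator_of_notMem h, indicator_of_notMem h, map_zero]
    -- integrability of translated g'
    have hg't : IntegrableOn (fun u => g' (u - t)) (Ico t 1) := by
      have h0 : IntegrableOn (fun u => g0 (u - t)) (Ico t 1) := (hg0.comp_sub_right t).restrict
      refine h0.congr_fun (fun u hu => ?_) measurableSet_Ico
      have : u - t ∈ Icc (0:ℝ) 1 := ⟨by linarith [hu.1], by linarith [hu.2.le]⟩
      simp only [hg0def]
      rw [indicator_of_mem this]
    have hind1int : Integrable ((Ico t 1).indicator (fun u => g' (u - t))) :=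
      (integrable_indicator_iff (f := fun u => g' (u - t)) measurableSet_Ico).2 hg't
    have hind2int : Integrable ((Ico (0:ℝ) (1-t)).indicator g') :=
      (integrable_indicator_iff (f := g') measurableSet_Ico).2 (hg'.mono_set hsubset1)
    have hkint : Integrable k := hind1int.sub hind2int
    -- integrability of paired indicator versions
    have hpair1 : IntegrableOn (fun u => pairCLM (f' u) (g' (u - t))) (Ico t 1) := by
      refine Integrable.mono' (hg't.norm.const_mul M)
        (pairCLM.continuous₂.comp_stronglyMeasurable
          ((hf'm).prodMk (hg'm.comp_measurable (measurable_sub_const t)))).aestronglyMeasurable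
        ?_
      filter_upwards [ae_restrict_of_ae hN0, ae_restrict_mem measurableSet_Ico] with u huN hum
      have hp := hNsub u (hsubsetI hum) huN
      calc ‖pairCLM (f' u) (g' (u - t))‖ ≤ ‖f' u‖ * ‖g' (u - t)‖ := pairCLM_norm_le _ _
        _ ≤ M * ‖g' (u - t)‖ := mul_le_mul_of_nonneg_right hp.2.1 (norm_nonneg _)
    have hpairF2 : IntegrableOn F2 (Ico (0:ℝ) (1-t)) := hb2.mono_set hsubset1
    have hi1 : Integrable (fun u => pairCLM (f' u)
        ((Ico t 1).indicator (fun v => g' (v - t)) u)) μ01 := by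
      have heq : (fun u => pairCLM (f' u) ((Ico t 1).indicator (fun v => g' (v - t)) u))
          = (Ico t 1).indicator (fun u => pairCLM (f' u) (g' (u - t))) := by
        funext u
        exact hpair_ind _ _ u
      rw [heq]
      exact ((integrable_indicator_iff measurableSet_Ico).2 hpair1).restrict
    have hi2 : Integrable (fun u => pairCLM (f' u)
        ((Ico (0:ℝ) (1-t)).indicator g' u)) μ01 := by
      have heq : (fun u => pairCLM (f' u) ((Ico (0:ℝ) (1-t)).indicator g' u))
          = (Ico (0:ℝ) (1-t)).indicator F2 := by
        funext u
        exact hpair_ind _ _ u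
      rw [heq]
      exact ((integrable_indicator_iff measurableSet_Ico).2 hpairF2).restrict
    -- rewrite A-part as integral of pairing against k
    have hApart : (∫ s in Ico (0:ℝ) (1-t), F1 s) - (∫ s in Ico (0:ℝ) (1-t), F2 s)
        = ∫ u in Icc (0:ℝ) 1, pairCLM (f' u) (k u) := by
      have e1 : (∫ u in Ico t 1, pairCLM (f' u) (g' (u - t)))
          = ∫ u in Icc (0:ℝ) 1, pairCLM (f' u)
              ((Ico t 1).indicator (fun v => g' (v - t)) u) := by
        have heq : (fun u => pairCLM (f' u) ((Ico t 1).indicator (fun v => g' (v - t)) u))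
            = (Ico t 1).indicator (fun u => pairCLM (f' u) (g' (u - t))) := by
          funext u; exact hpair_ind _ _ u
        rw [heq, integral_indicator measurableSet_Ico,
          Measure.restrict_restrict measurableSet_Ico, inter_eq_left.2 hsubsetI]
      have e2 : (∫ s in Ico (0:ℝ) (1-t), F2 s)
          = ∫ u in Icc (0:ℝ) 1, pairCLM (f' u) ((Ico (0:ℝ) (1-t)).indicator g' u) := by
        have heq : (fun u => pairCLM (f' u) ((Ico (0:ℝ) (1-t)).indicator g' u))
            = (Ico (0:ℝ) (1-t)).indicator F2 := by
          funext u; exact hpair_ind _ _ u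
        rw [heq, integral_indicator measurableSet_Ico,
          Measure.restrict_restrict measurableSet_Ico, inter_eq_left.2 hsubset1]
      rw [hchg, e1, e2, ← integral_sub hi1 hi2]
      refine integral_congr_ae (Eventually.of_forall fun u => ?_)
      simp only [hk]
      rw [map_sub]
    -- bound the A-part
    have hAbound : |∫ u in Icc (0:ℝ) 1, pairCLM (f' u) (k u)| ≤ M * (Tt t + St t + St t) := by
      have step1 : ‖∫ u in Icc (0:ℝ) 1, pairCLM (f' u) (k u)‖ ≤
          ∫ u in Icc (0:ℝ) 1, M * ‖k u‖ := by
        refine norm_integral_le_of_norm_le ((hkint.norm.const_mul M).restrict) ?_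
        filter_upwards [ae_restrict_of_ae hN0, ae_restrict_mem measurableSet_Icc] with u huN hum
        have hp := hNsub u hum huN
        calc ‖pairCLM (f' u) (k u)‖ ≤ ‖f' u‖ * ‖k u‖ := pairCLM_norm_le _ _
          _ ≤ M * ‖k u‖ := mul_le_mul_of_nonneg_right hp.2.1 (norm_nonneg _)
      have step2 : (∫ u in Icc (0:ℝ) 1, M * ‖k u‖) ≤ M * ∫ u, ‖k u‖ := by
        rw [integral_const_mul]
        refine mul_le_mul_of_nonneg_left ?_ hM0
        exact setIntegral_le_integral hkint.norm
          (Eventually.of_forall fun u => norm_nonneg _)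
      -- bound ∫ ‖k‖
      have hind1n : Integrable ((Icc (1:ℝ) (1+t)).indicator (fun u => ‖g' (u - t)‖)) := by
        refine (integrable_indicator_iff measurableSet_Icc).2 ?_
        have h0 : IntegrableOn (fun u => ‖g0 (u - t)‖) (Icc (1:ℝ) (1+t)) :=
          (hg0.comp_sub_right t).norm.restrict
        refine h0.congr_fun (fun u hu => ?_) measurableSet_Icc
        have : u - t ∈ Icc (0:ℝ) 1 := ⟨by linarith [hu.1], by linarith [hu.2]⟩
        simp only [hg0def]
        rw [indicator_of_mem this]
      have hind2n : Integrable ((Icc (1-t) (1:ℝ)).indicator (fun u => ‖g' u‖)) :=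
        (integrable_indicator_iff measurableSet_Icc).2 ((hg'.mono_set hsubset3).norm)
      have iA : Integrable (fun u => ‖g0 (u - t) - g0 u‖) :=
        ((hg0.comp_sub_right t).sub hg0).norm
      have step3 : (∫ u, ‖k u‖) ≤ Tt t + St t + St t := by
        have hmono : (∫ u, ‖k u‖) ≤ ∫ u, (‖g0 (u - t) - g0 u‖
            + (Icc (1:ℝ) (1+t)).indicator (fun u => ‖g' (u - t)‖) u
            + (Icc (1-t) (1:ℝ)).indicator (fun u => ‖g' u‖) u) := by
          refine integral_mono hkint.norm ((iA.add hind1n).add hind2n) ?_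
          intro u
          exact aux_k_bound g' ⟨ht0, ht1⟩ u
        have hsum : (∫ u, (‖g0 (u - t) - g0 u‖
            + (Icc (1:ℝ) (1+t)).indicator (fun u => ‖g' (u - t)‖) u
            + (Icc (1-t) (1:ℝ)).indicator (fun u => ‖g' u‖) u))
            = Tt t + (∫ u, (Icc (1:ℝ) (1+t)).indicator (fun u => ‖g' (u - t)‖) u)
              + ∫ u, (Icc (1-t) (1:ℝ)).indicator (fun u => ‖g' u‖) u := by
          have i12 : Integrable (fun u => ‖g0 (u - t) - g0 u‖
              + (Icc (1:ℝ) (1+t)).indicator (fun u => ‖g' (u - t)‖) u) :=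
            iA.add hind1n
          rw [integral_add i12 hind2n, integral_add iA hind1n]
        have hindint1 : (∫ u, (Icc (1:ℝ) (1+t)).indicator (fun u => ‖g' (u - t)‖) u)
            = St t := by
          rw [integral_indicator measurableSet_Icc]
          have hemb : MeasurableEmbedding (fun x : ℝ => x + t) := measurableEmbedding_addRight t
          have := (measurePreserving_add_right volume t).setIntegral_preimage_emb hemb
            (fun u => ‖g' (u - t)‖) (Icc 1 (1+t))
          have hpre : (fun x : ℝ => x + t) ⁻¹' Icc 1 (1+t) = Icc (1-t) 1 := by
            ext x
            simp only [mem_preimage, mem_Icc]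
            constructor
            · rintro ⟨hx1, hx2⟩; exact ⟨by linarith, by linarith⟩
            · rintro ⟨hx1, hx2⟩; exact ⟨by linarith, by linarith⟩
          rw [hpre] at this
          rw [← this]
          refine setIntegral_congr_fun measurableSet_Icc (fun u _ => ?_)
          simp
        have hindint2 : (∫ u, (Icc (1-t) (1:ℝ)).indicator (fun u => ‖g' u‖) u) = St t := by
          rw [integral_indicator measurableSet_Icc]
        rw [hsum, hindint1, hindint2] at hmono
        exact hmono
      calc |∫ u in Icc (0:ℝ) 1, pairCLM (f' u) (k u)|
          = ‖∫ u in Icc (0:ℝ) 1, pairCLM (f' u) (k u)‖ := (Real.norm_eq_abs _).symm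
        _ ≤ ∫ u in Icc (0:ℝ) 1, M * ‖k u‖ := step1
        _ ≤ M * ∫ u, ‖k u‖ := step2
        _ ≤ M * (Tt t + St t + St t) := mul_le_mul_of_nonneg_left step3 hM0
    -- bound the E-part
    have hEbound : |∫ s in Icc (1-t) 1, F3 s| ≤ (‖B‖ * M + M) * St t := by
      have step1 : ‖∫ s in Icc (1-t) 1, F3 s‖ ≤
          ∫ s in Icc (1-t) 1, (‖B‖ * M + M) * ‖g' s‖ := by
        refine norm_integral_le_of_norm_le
          (((hg'.mono_set hsubset3).norm.const_mul (‖B‖ * M + M))) ?_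
        filter_upwards [ae_restrict_of_ae (hNshift (t-1)), ae_restrict_of_ae hN0,
          ae_restrict_mem measurableSet_Icc] with s hsN1 hsN0 hsm
        have hmemI : s + (t - 1) ∈ Icc (0:ℝ) 1 := ⟨by linarith [hsm.1], by linarith [hsm.2]⟩
        have hmemI2 : s ∈ Icc (0:ℝ) 1 := ⟨by linarith [hsm.1], hsm.2⟩
        have hp1 := hNsub (s + (t-1)) hmemI hsN1
        have hp2 := hNsub s hmemI2 hsN0
        calc ‖F3 s‖ ≤ ‖B (f' (s + (t-1))) - f' s‖ * ‖g' s‖ := pairCLM_norm_le _ _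
          _ ≤ (‖B‖ * M + M) * ‖g' s‖ := by
            refine mul_le_mul_of_nonneg_right ?_ (norm_nonneg _)
            calc ‖B (f' (s + (t-1))) - f' s‖ ≤ ‖B (f' (s + (t-1)))‖ + ‖f' s‖ := norm_sub_le _ _
              _ ≤ ‖B‖ * ‖f' (s + (t-1))‖ + ‖f' s‖ := add_le_add (B.le_opNorm _) le_rfl
              _ ≤ ‖B‖ * M + M := add_le_add
                  (mul_le_mul_of_nonneg_left hp1.2.1 (norm_nonneg _)) hp2.2.1
      calc |∫ s in Icc (1-t) 1, F3 s| = ‖∫ s in Icc (1-t) 1, F3 s‖ := (Real.norm_eq_abs _).symm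
        _ ≤ ∫ s in Icc (1-t) 1, (‖B‖ * M + M) * ‖g' s‖ := step1
        _ = (‖B‖ * M + M) * St t := by
            rw [integral_const_mul]
    -- assemble
    rw [hPsplit, hApart]
    calc |(∫ u in Icc (0:ℝ) 1, pairCLM (f' u) (k u)) + ∫ s in Icc (1-t) 1, F3 s|
        ≤ |∫ u in Icc (0:ℝ) 1, pairCLM (f' u) (k u)| + |∫ s in Icc (1-t) 1, F3 s| :=
          abs_add_le _ _
      _ ≤ M * (Tt t + St t + St t) + (‖B‖ * M + M) * St t := add_le_add hAbound hEbound
      _ = M * Tt t + (3 * M + M * ‖B‖) * St t := by ring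
  -- conclude by squeezing
  have hlim : Tendsto (fun t => M * Tt t + (3 * M + M * ‖B‖) * St t)
      (nhdsWithin (0:ℝ) (Ioi 0)) (nhds 0) := by
    have := (hT.const_mul M).add (hS.const_mul (3 * M + M * ‖B‖))
    simpa using this
  refine squeeze_zero_norm' ?_ hlim
  filter_upwards [hmem] with t ht
  rw [Real.norm_eq_abs]
  exact hbound t ht
end

section
/- For Re(λ) > 0 and a column-stochastic matrix B on ℓ¹, the series ∑_{k=0}^∞ e^{−λk} ∫₀¹ e^{−λ(t+1−s)} B^{k+1} f(t) dt converges absolutely in ℓ¹ for every f ∈ L^∞([0,1], ℓ¹) and every s ∈ [0,1], and the resulting function R(λ)f, given by (R(λ)f)(s) = ∑_{k=0}^∞ e^{−λk} ∫₀¹ e^{−λ(t+1−s)} B^{k+1} f(t) dt + ∫_s¹ e^{λ(s−t)} f(t) dt, defines a bounded linear operator R(λ) on L^∞([0,1], ℓ¹). -/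
open MeasureTheory Set Filter
open scoped NNReal ENNReal

/-- The candidate resolvent `(R(λ)f)(s) = ∑_{k=0}^∞ e^{−λk} ∫₀¹ e^{−λ(t+1−s)} B^{k+1} f(t) dt
+ ∫_s¹ e^{λ(s−t)} f(t) dt` on `L^∞([0,1], ℓ¹)`. -/
noncomputable def resolventFormula {J : Type*}
    (lam : ℂ) (B : lp (fun _ : J => ℂ) 1 →L[ℂ] lp (fun _ : J => ℂ) 1)
    (f : ℝ → lp (fun _ : J => ℂ) 1) : ℝ → lp (fun _ : J => ℂ) 1 := fun s =>
  (∑' k : ℕ, Complex.exp (-lam * k) •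
      ∫ t in Icc (0 : ℝ) 1, Complex.exp (-lam * (t + 1 - s)) • (B ^ (k + 1)) (f t)) +
    ∫ t in Icc s 1, Complex.exp (lam * (s - t)) • f t

lemma norm_cexp_mul_real (c : ℂ) (x : ℝ) :
    ‖Complex.exp (c * x)‖ = Real.exp (c.re * x) := by
  rw [Complex.norm_exp]
  congr 1
  simp [Complex.mul_re]

section Aux

variable {J : Type*} [Countable J]

local notation "ℓ₁" => lp (fun _ : J => ℂ) 1
local notation "μ01" => volume.restrict (Icc (0 : ℝ) 1)

lemma norm_pow_apply_le (B : ℓ₁ →L[ℂ] ℓ₁) (hB : ‖B‖ = 1) (k : ℕ) (x : ℓ₁) :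
    ‖(B ^ (k + 1)) x‖ ≤ ‖x‖ := by
  calc ‖(B ^ (k + 1)) x‖ ≤ ‖B ^ (k + 1)‖ * ‖x‖ := (B ^ (k + 1)).le_opNorm x
    _ ≤ ‖B‖ ^ (k + 1) * ‖x‖ :=
        mul_le_mul_of_nonneg_right (norm_pow_le' B (Nat.succ_pos k)) (norm_nonneg x)
    _ = ‖x‖ := by rw [hB]; simp

lemma main_integrand (lam : ℂ) (hlam : 0 < lam.re)
    (B : ℓ₁ →L[ℂ] ℓ₁) (hB : ‖B‖ = 1) {f : ℝ → ℓ₁} (hf : Integrable f μ01)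
    {s : ℝ} (hs : s ∈ Icc (0 : ℝ) 1) (k : ℕ) :
    Integrable (fun t : ℝ => Complex.exp (-lam * (t + 1 - s)) • (B ^ (k + 1)) (f t)) μ01 ∧
    ‖∫ t in Icc (0 : ℝ) 1, Complex.exp (-lam * (t + 1 - s)) • (B ^ (k + 1)) (f t)‖
      ≤ ∫ t in Icc (0 : ℝ) 1, ‖f t‖ := by
  have hBf : Integrable (fun t : ℝ => (B ^ (k + 1)) (f t)) μ01 :=
    (B ^ (k + 1)).integrable_comp hf
  have hbound : ∀ᵐ (t : ℝ) ∂μ01,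
      ‖Complex.exp (-lam * (t + 1 - s)) • (B ^ (k + 1)) (f t)‖ ≤ ‖f t‖ := by
    refine (ae_restrict_iff' measurableSet_Icc).2 (ae_of_all _ fun t ht => ?_)
    rw [norm_smul]
    have hcast : ((t : ℂ) + 1 - s) = ((t + 1 - s : ℝ) : ℂ) := by push_cast; ring
    rw [hcast, norm_cexp_mul_real]
    have h1 : Real.exp ((-lam).re * (t + 1 - s)) ≤ 1 := by
      rw [Real.exp_le_one_iff]
      have h2 : (0 : ℝ) ≤ t + 1 - s := by
        have := ht.1; have := hs.2; linarith
      simp only [Complex.neg_re]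
      exact mul_nonpos_of_nonpos_of_nonneg (by linarith) h2
    calc Real.exp ((-lam).re * (t + 1 - s)) * ‖(B ^ (k + 1)) (f t)‖
        ≤ 1 * ‖f t‖ :=
          mul_le_mul h1 (norm_pow_apply_le B hB k (f t)) (norm_nonneg _) zero_le_one
      _ = ‖f t‖ := one_mul _
  have hint : Integrable (fun t : ℝ => Complex.exp (-lam * (t + 1 - s)) • (B ^ (k + 1)) (f t)) μ01 := by
    refine (hf.norm).mono ?_ ?_
    · have hc : Continuous fun t : ℝ => Complex.exp (-lam * (t + 1 - s)) :=
        Complex.continuous_exp.comp (continuous_const.mul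
          ((Complex.continuous_ofReal.add continuous_const).sub continuous_const))
      exact (hc.aestronglyMeasurable).smul hBf.aestronglyMeasurable
    · filter_upwards [hbound] with t ht
      simpa using ht
  refine ⟨hint, ?_⟩
  calc ‖∫ t in Icc (0 : ℝ) 1, Complex.exp (-lam * (t + 1 - s)) • (B ^ (k + 1)) (f t)‖
      ≤ ∫ t in Icc (0 : ℝ) 1, ‖Complex.exp (-lam * (t + 1 - s)) • (B ^ (k + 1)) (f t)‖ :=
        norm_integral_le_integral_norm _
    _ ≤ ∫ t in Icc (0 : ℝ) 1, ‖f t‖ :=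
        integral_mono_of_nonneg (ae_of_all _ fun t => norm_nonneg _) hf.norm hbound


lemma tail_integrand (lam : ℂ) (hlam : 0 < lam.re) {f : ℝ → ℓ₁} (hf : Integrable f μ01)
    {s : ℝ} (hs : s ∈ Icc (0 : ℝ) 1) :
    Integrable (fun t : ℝ => Complex.exp (lam * (s - t)) • f t) (volume.restrict (Icc s 1)) ∧
    ‖∫ t in Icc s 1, Complex.exp (lam * (s - t)) • f t‖ ≤ ∫ t in Icc (0 : ℝ) 1, ‖f t‖ := by
  have hsub : Icc s 1 ⊆ Icc (0 : ℝ) 1 := Icc_subset_Icc hs.1 le_rfl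
  have hf' : Integrable f (volume.restrict (Icc s 1)) :=
    hf.mono_measure (Measure.restrict_mono hsub le_rfl)
  have hbound : ∀ᵐ (t : ℝ) ∂(volume.restrict (Icc s 1)),
      ‖Complex.exp (lam * (s - t)) • f t‖ ≤ ‖f t‖ := by
    refine (ae_restrict_iff' measurableSet_Icc).2 (ae_of_all _ fun t ht => ?_)
    rw [norm_smul]
    have hcast : ((s : ℂ) - t) = ((s - t : ℝ) : ℂ) := by push_cast; ring
    rw [hcast, norm_cexp_mul_real]
    have h1 : Real.exp (lam.re * (s - t)) ≤ 1 := by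
      rw [Real.exp_le_one_iff]
      exact mul_nonpos_of_nonneg_of_nonpos hlam.le (by linarith [ht.1])
    calc Real.exp (lam.re * (s - t)) * ‖f t‖ ≤ 1 * ‖f t‖ :=
          mul_le_mul_of_nonneg_right h1 (norm_nonneg _)
      _ = ‖f t‖ := one_mul _
  have hint : Integrable (fun t : ℝ => Complex.exp (lam * (s - t)) • f t)
      (volume.restrict (Icc s 1)) := by
    refine (hf'.norm).mono ?_ ?_
    · have hc : Continuous fun t : ℝ => Complex.exp (lam * (s - t)) :=
        Complex.continuous_exp.comp (continuous_const.mul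
          (continuous_const.sub Complex.continuous_ofReal))
      exact (hc.aestronglyMeasurable).smul hf'.aestronglyMeasurable
    · filter_upwards [hbound] with t ht
      simpa using ht
  refine ⟨hint, ?_⟩
  calc ‖∫ t in Icc s 1, Complex.exp (lam * (s - t)) • f t‖
      ≤ ∫ t in Icc s 1, ‖Complex.exp (lam * (s - t)) • f t‖ := norm_integral_le_integral_norm _
    _ ≤ ∫ t in Icc s 1, ‖f t‖ :=
        integral_mono_of_nonneg (ae_of_all _ fun t => norm_nonneg _) hf'.norm hbound
    _ ≤ ∫ t in Icc (0 : ℝ) 1, ‖f t‖ :=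
        setIntegral_mono_set hf.norm (ae_of_all _ fun t => norm_nonneg _)
          (HasSubset.Subset.eventuallyLE hsub)

lemma term_norm_le (lam : ℂ) (hlam : 0 < lam.re)
    (B : ℓ₁ →L[ℂ] ℓ₁) (hB : ‖B‖ = 1) {f : ℝ → ℓ₁} (hf : Integrable f μ01)
    {s : ℝ} (hs : s ∈ Icc (0 : ℝ) 1) (k : ℕ) :
    ‖Complex.exp (-lam * k) •
        ∫ t in Icc (0 : ℝ) 1, Complex.exp (-lam * (t + 1 - s)) • (B ^ (k + 1)) (f t)‖
      ≤ Real.exp (-lam.re) ^ k * ∫ t in Icc (0 : ℝ) 1, ‖f t‖ := by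
  rw [norm_smul]
  have hcast : ((k : ℂ)) = ((k : ℝ) : ℂ) := by push_cast; ring
  rw [hcast, norm_cexp_mul_real]
  have h1 : Real.exp ((-lam).re * (k : ℝ)) = Real.exp (-lam.re) ^ k := by
    rw [Complex.neg_re, mul_comm, Real.exp_nat_mul]
  rw [h1]
  exact mul_le_mul_of_nonneg_left (main_integrand lam hlam B hB hf hs k).2
    (pow_nonneg (Real.exp_pos _).le k)

end Aux

set_option maxHeartbeats 1000000 in
set_option synthInstance.maxHeartbeats 400000 in
/-- For `Re(λ) > 0` and a column-stochastic matrix `B` on `ℓ¹` (so `‖B‖ = 1`), the series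
`∑_{k} e^{−λk} ∫₀¹ e^{−λ(t+1−s)} B^{k+1} f(t) dt` converges absolutely in `ℓ¹` for every
`f ∈ L^∞([0,1], ℓ¹)` and `s ∈ [0,1]`, and the formula `R(λ)` defines a bounded linear
operator on `L^∞([0,1], ℓ¹)`. -/
theorem stmt_10 {J : Type*} [Countable J] (lam : ℂ) (hlam : 0 < lam.re)
    (B : lp (fun _ : J => ℂ) 1 →L[ℂ] lp (fun _ : J => ℂ) 1) (hB : ‖B‖ = 1) :
    (∀ f : ℝ → lp (fun _ : J => ℂ) 1,
        MemLp f ∞ (volume.restrict (Icc (0 : ℝ) 1)) → ∀ s ∈ Icc (0 : ℝ) 1,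
        Summable fun k : ℕ => ‖Complex.exp (-lam * k) •
          ∫ t in Icc (0 : ℝ) 1, Complex.exp (-lam * (t + 1 - s)) • (B ^ (k + 1)) (f t)‖) ∧
    (∀ f g : ℝ → lp (fun _ : J => ℂ) 1,
        MemLp f ∞ (volume.restrict (Icc (0 : ℝ) 1)) →
        MemLp g ∞ (volume.restrict (Icc (0 : ℝ) 1)) → ∀ s ∈ Icc (0 : ℝ) 1,
        resolventFormula lam B (f + g) s
          = resolventFormula lam B f s + resolventFormula lam B g s) ∧
    (∀ (c : ℂ) (f : ℝ → lp (fun _ : J => ℂ) 1),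
        MemLp f ∞ (volume.restrict (Icc (0 : ℝ) 1)) → ∀ s ∈ Icc (0 : ℝ) 1,
        resolventFormula lam B (c • f) s = c • resolventFormula lam B f s) ∧
    (∃ C : ℝ, 0 ≤ C ∧ ∀ f : ℝ → lp (fun _ : J => ℂ) 1,
        MemLp f ∞ (volume.restrict (Icc (0 : ℝ) 1)) →
        eLpNorm (resolventFormula lam B f) ∞ (volume.restrict (Icc (0 : ℝ) 1))
          ≤ ENNReal.ofReal C * eLpNorm f ∞ (volume.restrict (Icc (0 : ℝ) 1))) := by
  haveI hfin : IsFiniteMeasure (volume.restrict (Icc (0 : ℝ) 1)) :=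
    ⟨by rw [Measure.restrict_apply_univ]; simp [Real.volume_Icc]⟩
  have hr0 : (0 : ℝ) ≤ Real.exp (-lam.re) := (Real.exp_pos _).le
  have hr1 : Real.exp (-lam.re) < 1 := by
    rw [Real.exp_lt_one_iff]; linarith
  -- summability of norms, for integrable f
  have hsumnorm : ∀ f : ℝ → lp (fun _ : J => ℂ) 1,
      Integrable f (volume.restrict (Icc (0 : ℝ) 1)) → ∀ s ∈ Icc (0 : ℝ) 1,
      Summable fun k : ℕ => ‖Complex.exp (-lam * k) •
        ∫ t in Icc (0 : ℝ) 1, Complex.exp (-lam * (t + 1 - s)) • (B ^ (k + 1)) (f t)‖ := by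
    intro f hf s hs
    exact Summable.of_nonneg_of_le (fun k => norm_nonneg _)
      (fun k => term_norm_le lam hlam B hB hf hs k)
      ((summable_geometric_of_lt_one hr0 hr1).mul_right _)
  have hsumvec : ∀ f : ℝ → lp (fun _ : J => ℂ) 1,
      Integrable f (volume.restrict (Icc (0 : ℝ) 1)) → ∀ s ∈ Icc (0 : ℝ) 1,
      Summable fun k : ℕ => Complex.exp (-lam * k) •
        ∫ t in Icc (0 : ℝ) 1, Complex.exp (-lam * (t + 1 - s)) • (B ^ (k + 1)) (f t) :=
    fun f hf s hs => Summable.of_norm (hsumnorm f hf s hs)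
  refine ⟨fun f hf s hs => hsumnorm f (hf.integrable le_top) s hs, ?_, ?_, ?_⟩
  · -- additivity
    intro f g hf hg s hs
    have hfi := hf.integrable le_top
    have hgi := hg.integrable le_top
    have hfgi := hfi.add hgi
    simp only [resolventFormula]
    have hmain : ∀ k : ℕ,
        (∫ t in Icc (0 : ℝ) 1, Complex.exp (-lam * (t + 1 - s)) • (B ^ (k + 1)) ((f + g) t))
          = (∫ t in Icc (0 : ℝ) 1, Complex.exp (-lam * (t + 1 - s)) • (B ^ (k + 1)) (f t))
            + ∫ t in Icc (0 : ℝ) 1, Complex.exp (-lam * (t + 1 - s)) • (B ^ (k + 1)) (g t) := by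
      intro k
      rw [← integral_add (main_integrand lam hlam B hB hfi hs k).1
        (main_integrand lam hlam B hB hgi hs k).1]
      refine integral_congr_ae (ae_of_all _ fun t => ?_)
      simp [map_add, smul_add]
    have htsum :
        (∑' k : ℕ, Complex.exp (-lam * k) •
          ∫ t in Icc (0 : ℝ) 1, Complex.exp (-lam * (t + 1 - s)) • (B ^ (k + 1)) ((f + g) t))
        = (∑' k : ℕ, Complex.exp (-lam * k) •
            ∫ t in Icc (0 : ℝ) 1, Complex.exp (-lam * (t + 1 - s)) • (B ^ (k + 1)) (f t))
          + ∑' k : ℕ, Complex.exp (-lam * k) •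
            ∫ t in Icc (0 : ℝ) 1, Complex.exp (-lam * (t + 1 - s)) • (B ^ (k + 1)) (g t) := by
      rw [← Summable.tsum_add (hsumvec f hfi s hs) (hsumvec g hgi s hs)]
      exact tsum_congr fun k => by rw [hmain k, smul_add]
    have htail :
        (∫ t in Icc s 1, Complex.exp (lam * (s - t)) • (f + g) t)
          = (∫ t in Icc s 1, Complex.exp (lam * (s - t)) • f t)
            + ∫ t in Icc s 1, Complex.exp (lam * (s - t)) • g t := by
      rw [← integral_add (tail_integrand lam hlam hfi hs).1 (tail_integrand lam hlam hgi hs).1]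
      refine integral_congr_ae (ae_of_all _ fun t => ?_)
      simp [smul_add]
    rw [htsum, htail]
    abel
  · -- homogeneity
    intro c f hf s hs
    have hfi := hf.integrable le_top
    simp only [resolventFormula]
    have hmain : ∀ k : ℕ,
        (∫ t in Icc (0 : ℝ) 1, Complex.exp (-lam * (t + 1 - s)) • (B ^ (k + 1)) ((c • f) t))
          = c • ∫ t in Icc (0 : ℝ) 1, Complex.exp (-lam * (t + 1 - s)) • (B ^ (k + 1)) (f t) := by
      intro k
      rw [← integral_smul]
      refine integral_congr_ae (ae_of_all _ fun t => ?_)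
      simp [_root_.map_smul, smul_comm c]
    have htsum :
        (∑' k : ℕ, Complex.exp (-lam * k) •
          ∫ t in Icc (0 : ℝ) 1, Complex.exp (-lam * (t + 1 - s)) • (B ^ (k + 1)) ((c • f) t))
        = c • ∑' k : ℕ, Complex.exp (-lam * k) •
            ∫ t in Icc (0 : ℝ) 1, Complex.exp (-lam * (t + 1 - s)) • (B ^ (k + 1)) (f t) := by
      rw [← Summable.tsum_const_smul c (hsumvec f hfi s hs)]
      exact tsum_congr fun k => by rw [hmain k, smul_comm]
    have htail :
        (∫ t in Icc s 1, Complex.exp (lam * (s - t)) • (c • f) t)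
          = c • ∫ t in Icc s 1, Complex.exp (lam * (s - t)) • f t := by
      rw [← integral_smul]
      refine integral_congr_ae (ae_of_all _ fun t => ?_)
      simp [smul_comm c]
    rw [htsum, htail, smul_add]
  · -- boundedness
    have hK0 : (0:ℝ) ≤ (1 - Real.exp (-lam.re))⁻¹ + 1 := by
      have : (0:ℝ) ≤ (1 - Real.exp (-lam.re))⁻¹ := inv_nonneg.2 (by linarith)
      linarith
    refine ⟨(1 - Real.exp (-lam.re))⁻¹ + 1, hK0, fun f hf => ?_⟩
    have hfi := hf.integrable le_top
    set Cf : ℝ := (eLpNorm f ∞ (volume.restrict (Icc (0 : ℝ) 1))).toReal with hCf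
    have hCf0 : 0 ≤ Cf := ENNReal.toReal_nonneg
    have hMle : (∫ t in Icc (0 : ℝ) 1, ‖f t‖) ≤ Cf := by
      have hae : ∀ᵐ t ∂(volume.restrict (Icc (0 : ℝ) 1)), ‖f t‖ ≤ Cf := by
        filter_upwards [ae_le_eLpNormEssSup (f := f) (μ := volume.restrict (Icc (0 : ℝ) 1))]
          with t ht
        rw [hCf, eLpNorm_exponent_top]
        calc ‖f t‖ = ((‖f t‖₊ : ℝ≥0∞)).toReal := by simp
          _ ≤ (eLpNormEssSup f (volume.restrict (Icc (0 : ℝ) 1))).toReal :=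
            ENNReal.toReal_mono (by rw [← eLpNorm_exponent_top]; exact hf.2.ne) ht
      calc (∫ t in Icc (0 : ℝ) 1, ‖f t‖) ≤ ∫ _t in Icc (0 : ℝ) 1, Cf :=
            integral_mono_of_nonneg (ae_of_all _ fun t => norm_nonneg _) (integrable_const _) hae
        _ = Cf := by
            rw [integral_const, measureReal_restrict_apply_univ]
            simp [Real.volume_Icc]
    have hpt : ∀ s ∈ Icc (0 : ℝ) 1,
        ‖resolventFormula lam B f s‖ ≤ ((1 - Real.exp (-lam.re))⁻¹ + 1) * Cf := by
      intro s hs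
      have h1 : ‖∑' k : ℕ, Complex.exp (-lam * k) •
          ∫ t in Icc (0 : ℝ) 1, Complex.exp (-lam * (t + 1 - s)) • (B ^ (k + 1)) (f t)‖
          ≤ (1 - Real.exp (-lam.re))⁻¹ * ∫ t in Icc (0 : ℝ) 1, ‖f t‖ := by
        calc ‖∑' k : ℕ, Complex.exp (-lam * k) •
            ∫ t in Icc (0 : ℝ) 1, Complex.exp (-lam * (t + 1 - s)) • (B ^ (k + 1)) (f t)‖
            ≤ ∑' k : ℕ, ‖Complex.exp (-lam * k) •
              ∫ t in Icc (0 : ℝ) 1, Complex.exp (-lam * (t + 1 - s)) • (B ^ (k + 1)) (f t)‖ :=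
              norm_tsum_le_tsum_norm (hsumnorm f hfi s hs)
          _ ≤ ∑' k : ℕ, Real.exp (-lam.re) ^ k * ∫ t in Icc (0 : ℝ) 1, ‖f t‖ :=
              Summable.tsum_le_tsum (fun k => term_norm_le lam hlam B hB hfi hs k)
                (hsumnorm f hfi s hs) ((summable_geometric_of_lt_one hr0 hr1).mul_right _)
          _ = (1 - Real.exp (-lam.re))⁻¹ * ∫ t in Icc (0 : ℝ) 1, ‖f t‖ := by
              rw [tsum_mul_right, tsum_geometric_of_lt_one hr0 hr1]
      have h2 := (tail_integrand lam hlam hfi hs).2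
      have hM0 : (0 : ℝ) ≤ ∫ t in Icc (0 : ℝ) 1, ‖f t‖ :=
        integral_nonneg fun t => norm_nonneg _
      calc ‖resolventFormula lam B f s‖
          ≤ ‖∑' k : ℕ, Complex.exp (-lam * k) •
              ∫ t in Icc (0 : ℝ) 1, Complex.exp (-lam * (t + 1 - s)) • (B ^ (k + 1)) (f t)‖
            + ‖∫ t in Icc s 1, Complex.exp (lam * (s - t)) • f t‖ := norm_add_le _ _
        _ ≤ (1 - Real.exp (-lam.re))⁻¹ * (∫ t in Icc (0 : ℝ) 1, ‖f t‖)
            + ∫ t in Icc (0 : ℝ) 1, ‖f t‖ := add_le_add h1 h2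
        _ = ((1 - Real.exp (-lam.re))⁻¹ + 1) * ∫ t in Icc (0 : ℝ) 1, ‖f t‖ := by ring
        _ ≤ ((1 - Real.exp (-lam.re))⁻¹ + 1) * Cf := by
            exact mul_le_mul_of_nonneg_left hMle hK0
    have haeb : ∀ᵐ s ∂(volume.restrict (Icc (0 : ℝ) 1)),
        ‖resolventFormula lam B f s‖ ≤ ((1 - Real.exp (-lam.re))⁻¹ + 1) * Cf :=
      (ae_restrict_iff' measurableSet_Icc).2 (ae_of_all _ fun s hs => hpt s hs)
    calc eLpNorm (resolventFormula lam B f) ∞ (volume.restrict (Icc (0 : ℝ) 1))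
        ≤ (volume.restrict (Icc (0 : ℝ) 1)) Set.univ ^ (∞ : ℝ≥0∞).toReal⁻¹
          * ENNReal.ofReal (((1 - Real.exp (-lam.re))⁻¹ + 1) * Cf) :=
          eLpNorm_le_of_ae_bound haeb
      _ = ENNReal.ofReal (((1 - Real.exp (-lam.re))⁻¹ + 1) * Cf) := by
          simp
      _ = ENNReal.ofReal ((1 - Real.exp (-lam.re))⁻¹ + 1) * ENNReal.ofReal Cf :=
          ENNReal.ofReal_mul hK0
      _ = ENNReal.ofReal ((1 - Real.exp (-lam.re))⁻¹ + 1)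
            * eLpNorm f ∞ (volume.restrict (Icc (0 : ℝ) 1)) := by
          rw [hCf, ENNReal.ofReal_toReal hf.2.ne]
end

section
/- Let D ⊆ X' be the set of functions in W^{1,∞}([0,1], ℂ^m) vanishing at both endpoints. Then D is bi-dense in L^∞([0,1], ℂ^m): for every f ∈ L^∞([0,1], ℂ^m) there exists a norm-bounded sequence (f_n) in D converging to f in the weak*-topology induced by L¹([0,1], ℂ^m). -/
open MeasureTheory Set Filter Metric Topology

section Aux

variable {E : Type*} [NormedAddCommGroup E] [NormedSpace ℝ E]

/-- Steklov-type average of `f'` over the ball of radius `r` around `x`. -/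
noncomputable def steklovAvg (f' : ℝ → E) (r : ℝ) (x : ℝ) : E :=
  (2*r)⁻¹ • ((∫ s in (0:ℝ)..(x+r), f' s) - ∫ s in (0:ℝ)..(x-r), f' s)

lemma steklovAvg_eq_average (f' : ℝ → E) (hf' : Integrable f') {r : ℝ} (hr : 0 < r) (x : ℝ) :
    steklovAvg f' r x = ⨍ y in closedBall x r, f' y := by
  rw [steklovAvg, setAverage_eq, Real.volume_real_closedBall (by linarith),
    Real.closedBall_eq_Icc, MeasureTheory.integral_Icc_eq_integral_Ioc,
    ← intervalIntegral.integral_of_le (by linarith : x - r ≤ x + r),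
    intervalIntegral.integral_interval_sub_left hf'.intervalIntegrable hf'.intervalIntegrable]

lemma steklovAvg_norm_le (f' : ℝ → E) (hf' : Integrable f') {C : ℝ}
    (hC : ∀ y, ‖f' y‖ ≤ C) {r : ℝ} (hr : 0 < r) (x : ℝ) : ‖steklovAvg f' r x‖ ≤ C := by
  have hC0 : 0 ≤ C := le_trans (norm_nonneg _) (hC 0)
  have h1 : (∫ s in (0:ℝ)..(x+r), f' s) - ∫ s in (0:ℝ)..(x-r), f' s
      = ∫ s in (x-r)..(x+r), f' s :=
    intervalIntegral.integral_interval_sub_left hf'.intervalIntegrable hf'.intervalIntegrable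
  rw [steklovAvg, h1, norm_smul]
  have h2 : ‖∫ s in (x-r)..(x+r), f' s‖ ≤ C * |(x+r) - (x-r)| :=
    intervalIntegral.norm_integral_le_of_norm_le_const fun y _ => hC y
  have h3 : |(x+r) - (x-r)| = 2*r := by
    rw [show (x+r) - (x-r) = 2*r by ring, abs_of_pos (by linarith)]
  rw [h3] at h2
  have h4 : ‖(2*r)⁻¹‖ = (2*r)⁻¹ := by
    rw [Real.norm_eq_abs, abs_of_pos (by positivity)]
  rw [h4]
  calc (2*r)⁻¹ * ‖∫ s in (x-r)..(x+r), f' s‖ ≤ (2*r)⁻¹ * (C * (2*r)) := by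
        exact mul_le_mul_of_nonneg_left h2 (by positivity)
    _ = C := by field_simp

lemma steklovAvg_lipschitz (f' : ℝ → E) (hf' : Integrable f') {C : ℝ}
    (hC : ∀ y, ‖f' y‖ ≤ C) {r : ℝ} (hr : 0 < r) :
    LipschitzWith (C/r).toNNReal (steklovAvg f' r) := by
  have hC0 : 0 ≤ C := le_trans (norm_nonneg _) (hC 0)
  apply LipschitzWith.of_dist_le_mul
  intro x y
  rw [Real.coe_toNNReal _ (by positivity), dist_eq_norm, Real.dist_eq]
  have key : steklovAvg f' r x - steklovAvg f' r y
      = (2*r)⁻¹ • ((∫ s in (y+r)..(x+r), f' s) - ∫ s in (y-r)..(x-r), f' s) := by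
    have i1 : (∫ s in (0:ℝ)..(x+r), f' s) - (∫ s in (0:ℝ)..(y+r), f' s)
        = ∫ s in (y+r)..(x+r), f' s :=
      intervalIntegral.integral_interval_sub_left hf'.intervalIntegrable
        hf'.intervalIntegrable
    have i2 : (∫ s in (0:ℝ)..(x-r), f' s) - (∫ s in (0:ℝ)..(y-r), f' s)
        = ∫ s in (y-r)..(x-r), f' s :=
      intervalIntegral.integral_interval_sub_left hf'.intervalIntegrable
        hf'.intervalIntegrable
    rw [steklovAvg, steklovAvg, ← smul_sub, sub_sub_sub_comm, i1, i2]
  rw [key, norm_smul]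
  have e1 : ‖∫ s in (y+r)..(x+r), f' s‖ ≤ C * |x - y| := by
    have h := intervalIntegral.norm_integral_le_of_norm_le_const
      (a := y+r) (b := x+r) (C := C) (f := f') fun z _ => hC z
    rwa [show (x+r) - (y+r) = x - y by ring] at h
  have e2 : ‖∫ s in (y-r)..(x-r), f' s‖ ≤ C * |x - y| := by
    have h := intervalIntegral.norm_integral_le_of_norm_le_const
      (a := y-r) (b := x-r) (C := C) (f := f') fun z _ => hC z
    rwa [show (x-r) - (y-r) = x - y by ring] at h
  have e3 : ‖(∫ s in (y+r)..(x+r), f' s) - ∫ s in (y-r)..(x-r), f' s‖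
      ≤ C * |x - y| + C * |x - y| := le_trans (norm_sub_le _ _) (add_le_add e1 e2)
  have h4 : ‖(2*r)⁻¹‖ = (2*r)⁻¹ := by
    rw [Real.norm_eq_abs, abs_of_pos (by positivity)]
  rw [h4]
  calc (2*r)⁻¹ * ‖(∫ s in (y+r)..(x+r), f' s) - ∫ s in (y-r)..(x-r), f' s‖
      ≤ (2*r)⁻¹ * (C * |x - y| + C * |x - y|) :=
        mul_le_mul_of_nonneg_left e3 (by positivity)
    _ = C / r * |x - y| := by field_simp; ring

/-- Piecewise-linear cutoff, vanishing at `0` and `1`, eventually `1` inside `(0,1)`. -/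
noncomputable def cutoff (n : ℕ) (x : ℝ) : ℝ :=
  max 0 (min 1 (((n : ℝ) + 1) * min x (1 - x)))

lemma cutoff_zero (n : ℕ) : cutoff n 0 = 0 := by norm_num [cutoff]

lemma cutoff_one (n : ℕ) : cutoff n 1 = 0 := by norm_num [cutoff]

lemma cutoff_nonneg (n : ℕ) (x : ℝ) : 0 ≤ cutoff n x := le_max_left _ _

lemma cutoff_le_one (n : ℕ) (x : ℝ) : cutoff n x ≤ 1 :=
  max_le zero_le_one (min_le_left _ _)

lemma cutoff_lipschitz (n : ℕ) : LipschitzWith ((n : NNReal) + 1) (cutoff n) := by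
  have h0 : LipschitzWith 1 (fun x : ℝ => min x (1 - x)) := by
    apply LipschitzWith.of_dist_le_mul
    intro x y
    rw [Real.dist_eq, Real.dist_eq, NNReal.coe_one, one_mul]
    refine (abs_min_sub_min_le_max _ _ _ _).trans (max_le le_rfl ?_)
    rw [show (1 - x) - (1 - y) = -(x - y) by ring, abs_neg]
  have h1 : LipschitzWith ((n : NNReal) + 1)
      (fun x : ℝ => ((n : ℝ) + 1) * min x (1 - x)) := by
    apply LipschitzWith.of_dist_le_mul
    intro x y
    have hd := h0.dist_le_mul x y
    rw [Real.dist_eq, Real.dist_eq, NNReal.coe_one, one_mul] at hd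
    rw [Real.dist_eq, Real.dist_eq, ← mul_sub, abs_mul,
      abs_of_nonneg (by positivity : (0:ℝ) ≤ (n : ℝ) + 1)]
    push_cast
    nlinarith [abs_nonneg (x - y), (by positivity : (0:ℝ) ≤ (n : ℝ) + 1)]
  exact (h1.const_min 1).const_max 0

lemma cutoff_eventually_one {x : ℝ} (hx : x ∈ Ioo (0:ℝ) 1) :
    ∀ᶠ n in atTop, cutoff n x = 1 := by
  have hq : 0 < min x (1 - x) := lt_min hx.1 (by linarith [hx.2])
  obtain ⟨N, hN⟩ := exists_nat_gt (1 / min x (1 - x))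
  filter_upwards [eventually_ge_atTop N] with n hn
  have hn' : (N : ℝ) ≤ (n : ℝ) := Nat.cast_le.mpr hn
  have h1 : 1 ≤ ((n : ℝ) + 1) * min x (1 - x) := by
    rw [div_lt_iff₀ hq] at hN
    nlinarith
  rw [cutoff, min_eq_left h1, max_eq_right zero_le_one]

lemma smul_lipschitzWith {φ : ℝ → ℝ} {A : ℝ → E} {Kφ KA : NNReal}
    (hφ : LipschitzWith Kφ φ) (hA : LipschitzWith KA A)
    (hφ0 : ∀ x, 0 ≤ φ x) (hφ1 : ∀ x, φ x ≤ 1) {CA : ℝ} (hAb : ∀ x, ‖A x‖ ≤ CA) :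
    LipschitzWith (Kφ * CA.toNNReal + KA) (fun x => φ x • A x) := by
  have hCA0 : 0 ≤ CA := le_trans (norm_nonneg _) (hAb 0)
  apply LipschitzWith.of_dist_le_mul
  intro x y
  rw [dist_eq_norm]
  have key : φ x • A x - φ y • A y = (φ x - φ y) • A x + φ y • (A x - A y) := by
    rw [sub_smul, smul_sub]; abel
  rw [key]
  have e1 : ‖(φ x - φ y) • A x‖ ≤ ((Kφ : ℝ) * dist x y) * CA := by
    rw [norm_smul]
    refine mul_le_mul ?_ (hAb x) (norm_nonneg _) (by positivity)
    rw [Real.norm_eq_abs, ← Real.dist_eq]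
    exact hφ.dist_le_mul x y
  have e2 : ‖φ y • (A x - A y)‖ ≤ (KA : ℝ) * dist x y := by
    rw [norm_smul, Real.norm_eq_abs, abs_of_nonneg (hφ0 y)]
    calc φ y * ‖A x - A y‖ ≤ 1 * ‖A x - A y‖ :=
          mul_le_mul_of_nonneg_right (hφ1 y) (norm_nonneg _)
      _ = dist (A x) (A y) := by rw [one_mul, dist_eq_norm]
      _ ≤ (KA : ℝ) * dist x y := hA.dist_le_mul x y
  calc ‖(φ x - φ y) • A x + φ y • (A x - A y)‖
      ≤ ‖(φ x - φ y) • A x‖ + ‖φ y • (A x - A y)‖ := norm_add_le _ _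
    _ ≤ ((Kφ : ℝ) * dist x y) * CA + (KA : ℝ) * dist x y := add_le_add e1 e2
    _ = ((Kφ : ℝ) * CA + (KA : ℝ)) * dist x y := by ring
    _ = ((Kφ * CA.toNNReal + KA : NNReal) : ℝ) * dist x y := by
        rw [NNReal.coe_add, NNReal.coe_mul, Real.coe_toNNReal _ hCA0]

end Aux

lemma euclid_sum_mul_le {m : ℕ} (a b : EuclideanSpace ℂ (Fin m)) :
    ‖∑ i, a i * b i‖ ≤ ‖a‖ * ‖b‖ := by
  set a' : EuclideanSpace ℂ (Fin m) := WithLp.toLp 2 (fun i => (starRingEnd ℂ) (a i)) with ha'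
  have h1 : (inner ℂ a' b : ℂ) = ∑ i, a i * b i := by
    simp [PiLp.inner_apply, ha', RCLike.inner_apply, mul_comm]
  have h2 : ‖a'‖ = ‖a‖ := by
    simp [EuclideanSpace.norm_eq, ha']
  calc ‖∑ i, a i * b i‖ = ‖(inner ℂ a' b : ℂ)‖ := by rw [h1]
    _ ≤ ‖a'‖ * ‖b‖ := norm_inner_le_norm _ _
    _ = ‖a‖ * ‖b‖ := by rw [h2]

/-- The set `D` of functions in `W^{1,∞}([0,1], ℂ^m)` (i.e. Lipschitz functions on `[0,1]`)
vanishing at both endpoints is bi-dense in `L^∞([0,1], ℂ^m)`: for every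
`f ∈ L^∞([0,1], ℂ^m)` there exists a norm-bounded sequence `(f_n)` in `D` converging to `f`
in the weak*-topology induced by `L¹([0,1], ℂ^m)` via the pairing
`⟨f,g⟩ = ∫₀¹ ⟨f(s), g(s)⟩ ds`. -/
theorem stmt_14 {m : ℕ} (f : ℝ → EuclideanSpace ℂ (Fin m)) (M : ℝ)
    (hfM : ∀ x ∈ Icc (0 : ℝ) 1, ‖f x‖ ≤ M)
    (hfmeas : AEStronglyMeasurable f (volume.restrict (Icc (0 : ℝ) 1))) :
    ∃ F : ℕ → ℝ → EuclideanSpace ℂ (Fin m),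
      (∀ n, ∃ K : NNReal, LipschitzOnWith K (F n) (Icc (0 : ℝ) 1)) ∧
      (∀ n, F n 0 = 0 ∧ F n 1 = 0) ∧
      (∃ C : ℝ, ∀ n, ∀ x ∈ Icc (0 : ℝ) 1, ‖F n x‖ ≤ C) ∧
      (∀ g : ℝ → EuclideanSpace ℂ (Fin m), IntegrableOn g (Icc (0 : ℝ) 1) →
        Tendsto (fun n : ℕ => ∫ x in Icc (0 : ℝ) 1, ∑ i, (F n x - f x) i * g x i)
          atTop (nhds 0)) := by
  set M' : ℝ := max M 0 with hM'
  have hM'0 : 0 ≤ M' := le_max_right _ _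
  set f' : ℝ → EuclideanSpace ℂ (Fin m) := (Icc (0:ℝ) 1).indicator f with hf'
  have hf'b : ∀ y, ‖f' y‖ ≤ M' := by
    intro y
    by_cases hy : y ∈ Icc (0:ℝ) 1
    · rw [hf', indicator_of_mem hy]
      exact le_trans (hfM y hy) (le_max_left _ _)
    · rw [hf', indicator_of_notMem hy]
      simpa using hM'0
  have hfint : IntegrableOn f (Icc (0:ℝ) 1) := by
    refine ⟨hfmeas, HasFiniteIntegral.restrict_of_bounded (C := M) measure_Icc_lt_top ?_⟩
    filter_upwards [ae_restrict_mem measurableSet_Icc] with x hx using hfM x hx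
  have hf'i : Integrable f' := hfint.integrable_indicator measurableSet_Icc
  set r : ℕ → ℝ := fun n => ((n : ℝ) + 1)⁻¹ with hrdef
  have hr : ∀ n, 0 < r n := fun n => by positivity
  -- uniform bound on the averages
  have hAb : ∀ n x, ‖steklovAvg f' (r n) x‖ ≤ M' :=
    fun n x => steklovAvg_norm_le f' hf'i hf'b (hr n) x
  have hFb : ∀ n x, ‖cutoff n x • steklovAvg f' (r n) x‖ ≤ M' := by
    intro n x
    rw [norm_smul, Real.norm_eq_abs, abs_of_nonneg (cutoff_nonneg n x)]
    calc cutoff n x * ‖steklovAvg f' (r n) x‖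
        ≤ 1 * ‖steklovAvg f' (r n) x‖ :=
          mul_le_mul_of_nonneg_right (cutoff_le_one n x) (norm_nonneg _)
      _ = ‖steklovAvg f' (r n) x‖ := one_mul _
      _ ≤ M' := hAb n x
  have hFlip : ∀ n : ℕ, LipschitzWith
      ((((n : ℕ) : NNReal) + 1) * M'.toNNReal + (M' / r n).toNNReal)
      (fun x => cutoff n x • steklovAvg f' (r n) x) := fun n =>
    smul_lipschitzWith (cutoff_lipschitz n) (steklovAvg_lipschitz f' hf'i hf'b (hr n))
      (cutoff_nonneg n) (cutoff_le_one n) (hAb n)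
  refine ⟨fun n x => cutoff n x • steklovAvg f' (r n) x, ?_, ?_, ⟨M', ?_⟩, ?_⟩
  · intro n
    refine ⟨(((n : ℕ) : NNReal) + 1) * M'.toNNReal + (M' / r n).toNNReal, ?_⟩
    exact (hFlip n).lipschitzOnWith
  · intro n
    constructor
    · simp only [cutoff_zero, zero_smul]
    · simp only [cutoff_one, zero_smul]
  · exact fun n x _ => hFb n x
  · -- weak* convergence
    intro g hg
    -- a.e. convergence of the averages (Lebesgue differentiation)
    have hae : ∀ᵐ x ∂(volume : Measure ℝ),
        Tendsto (fun n : ℕ => steklovAvg f' (r n) x) atTop (𝓝 (f' x)) := by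
      filter_upwards [IsUnifLocDoublingMeasure.ae_tendsto_average
        (μ := (volume : Measure ℝ)) hf'i.locallyIntegrable 1] with x hx
      have h2 : Tendsto (fun n : ℕ => ⨍ y in closedBall x (r n), f' y) atTop (𝓝 (f' x)) := by
        refine hx (ι := ℕ) (l := atTop) (fun _ => x) r ?_ ?_
        · refine tendsto_nhdsWithin_of_tendsto_nhds_of_eventually_within _ ?_ ?_
          · exact tendsto_one_div_add_atTop_nhds_zero_nat.congr (by simp [hrdef, one_div])
          · filter_upwards with n
            exact Set.mem_Ioi.2 (hr n)
        · filter_upwards with n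
          simp only [Metric.mem_closedBall, dist_self]
          positivity
      exact h2.congr fun n => (steklovAvg_eq_average f' hf'i (hr n) x).symm
    have hne : ∀ᵐ x ∂(volume : Measure ℝ), x ≠ 0 ∧ x ≠ 1 := by
      have hz : (volume : Measure ℝ) ({0, 1} : Set ℝ) = 0 := by
        rw [Set.insert_eq]
        exact measure_union_null (by simp) (by simp)
      rw [ae_iff]
      refine measure_mono_null ?_ hz
      intro x hx
      simp only [mem_setOf_eq, not_and_or, not_not] at hx
      simp only [mem_insert_iff, mem_singleton_iff]
      tauto
    have hlim : ∀ᵐ x ∂(volume.restrict (Icc (0:ℝ) 1)),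
        Tendsto (fun n : ℕ => cutoff n x • steklovAvg f' (r n) x - f x) atTop (𝓝 0) := by
      filter_upwards [ae_restrict_of_ae hae, ae_restrict_of_ae hne,
        ae_restrict_mem measurableSet_Icc] with x hx h01 hIcc
      have hIoo : x ∈ Ioo (0:ℝ) 1 :=
        ⟨lt_of_le_of_ne hIcc.1 (Ne.symm h01.1), lt_of_le_of_ne hIcc.2 h01.2⟩
      have hf'x : f' x = f x := indicator_of_mem hIcc f
      have h2 : Tendsto (fun n : ℕ => cutoff n x • steklovAvg f' (r n) x) atTop (𝓝 (f x)) := by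
        rw [← hf'x]
        refine hx.congr' ?_
        filter_upwards [cutoff_eventually_one hIoo] with n hn
        rw [hn, one_smul]
      simpa using h2.sub (tendsto_const_nhds (x := f x))
    -- dominated convergence
    have key := tendsto_integral_of_dominated_convergence
      (μ := volume.restrict (Icc (0:ℝ) 1))
      (F := fun n x => ∑ i, ((cutoff n x • steklovAvg f' (r n) x : EuclideanSpace ℂ (Fin m))
        - f x) i * g x i)
      (f := fun _ => (0 : ℂ)) (bound := fun x => (2 * M') * ‖g x‖)
      (fun n => by
        refine Finset.aestronglyMeasurable_fun_sum _ fun i _ => AEStronglyMeasurable.mul ?_ ?_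
        · exact (EuclideanSpace.proj (𝕜 := ℂ) i).continuous.comp_aestronglyMeasurable
            (((hFlip n).continuous.aestronglyMeasurable).sub hfmeas)
        · exact (EuclideanSpace.proj (𝕜 := ℂ) i).continuous.comp_aestronglyMeasurable
            hg.aestronglyMeasurable)
      ((hg.norm.const_mul _))
      (fun n => by
        filter_upwards [ae_restrict_mem measurableSet_Icc] with x hx
        calc ‖∑ i, ((cutoff n x • steklovAvg f' (r n) x : EuclideanSpace ℂ (Fin m))
              - f x) i * g x i‖
            ≤ ‖(cutoff n x • steklovAvg f' (r n) x : EuclideanSpace ℂ (Fin m)) - f x‖ * ‖g x‖ :=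
              euclid_sum_mul_le _ _
          _ ≤ (2 * M') * ‖g x‖ := by
              refine mul_le_mul_of_nonneg_right ?_ (norm_nonneg _)
              calc ‖(cutoff n x • steklovAvg f' (r n) x : EuclideanSpace ℂ (Fin m)) - f x‖
                  ≤ ‖(cutoff n x • steklovAvg f' (r n) x : EuclideanSpace ℂ (Fin m))‖ + ‖f x‖ :=
                    norm_sub_le _ _
                _ ≤ M' + M' := add_le_add (hFb n x)
                    (le_trans (hfM x hx) (le_max_left _ _))
                _ = 2 * M' := by ring)
      (by
        filter_upwards [hlim] with x hx
        have hsum : Tendsto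
            (fun n : ℕ => ∑ i, ((cutoff n x • steklovAvg f' (r n) x :
              EuclideanSpace ℂ (Fin m)) - f x) i * g x i) atTop
            (𝓝 (∑ _i : Fin m, (0 : ℂ))) := by
          refine tendsto_finset_sum _ fun i _ => ?_
          have hxi : Tendsto (fun n : ℕ => ((cutoff n x • steklovAvg f' (r n) x :
              EuclideanSpace ℂ (Fin m)) - f x) i) atTop (𝓝 0) := by
            have := ((EuclideanSpace.proj (𝕜 := ℂ) i).continuous.tendsto
              (0 : EuclideanSpace ℂ (Fin m))).comp hx
            simpa [Function.comp_def] using this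
          simpa using hxi.mul_const (g x i)
        simpa using hsum)
    simpa using key
end
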